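/- Let l ≥ 1 and let s_0, ..., s_l be the Chebyshev nodes s_k = (s̄+s̲)/2 - (s̄-s̲)/2 · cos((2k+1)π/(2l+2)) in an interval [s̲, s̄] with s̲ < s̄. Then every elementary Lagrange polynomial L_{s_k}(s) = ∏_{j≠k} (s - s_j)/(s_k - s_j) satisfies |L_{s_k}(s)| ≤ π for all s ∈ [s̲, s̄]. -/

import Mathlib

open Real Finset Polynomial

private lemma natDegree_T_le : ∀ n : ℕ, (Polynomial.Chebyshev.T ℝ (n : ℤ)).natDegree ≤ n
  | 0 => by simp
  | 1 => by simpa using Polynomial.natDegree_X_le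
  | (n + 2) => by
    have h1 := natDegree_T_le n
    have h2 := natDegree_T_le (n + 1)
    push_cast at h2 ⊢
    rw [Polynomial.Chebyshev.T_add_two]
    refine (Polynomial.natDegree_sub_le _ _).trans ?_
    rw [max_le_iff]
    refine ⟨(Polynomial.natDegree_mul_le).trans ?_, by omega⟩
    have hX : (2 * Polynomial.X : Polynomial ℝ).natDegree ≤ 1 :=
      (Polynomial.natDegree_mul_le).trans (by simp)
    omega

private lemma T_eq_C_mul_nodal {m : ℕ} (hm : 0 < m) (x : ℕ → ℝ)
    (hinj : ∀ i ∈ Finset.range m, ∀ j ∈ Finset.range m, x i = x j → i = j)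
    (hroot : ∀ j ∈ Finset.range m, (Polynomial.Chebyshev.T ℝ (m : ℤ)).eval (x j) = 0) :
    ∃ a : ℝ, a ≠ 0 ∧
      Polynomial.Chebyshev.T ℝ (m : ℤ) = Polynomial.C a * Lagrange.nodal (Finset.range m) x := by
  classical
  set Tm := Polynomial.Chebyshev.T ℝ (m : ℤ) with hTm
  set p := Lagrange.nodal (Finset.range m) x with hp
  have hpmonic : p.Monic := Lagrange.nodal_monic
  have hpdeg : p.natDegree = m := by
    rw [hp, Lagrange.natDegree_nodal, Finset.card_range]
  set a := Tm.coeff m with ha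
  set d := Tm - Polynomial.C a * p with hd
  have hdzero : d = 0 := by
    by_contra h
    have hcoeff : d.coeff m = 0 := by
      have : (Polynomial.C a * p).coeff m = a := by
        rw [Polynomial.coeff_C_mul, ← hpdeg, ← Polynomial.leadingCoeff, hpmonic.leadingCoeff,
          mul_one]
      simp [hd, Polynomial.coeff_sub, this]
      exact sub_self _
    have hdle : d.natDegree ≤ m := by
      refine (Polynomial.natDegree_sub_le _ _).trans ?_
      rw [max_le_iff]
      exact ⟨natDegree_T_le m, (Polynomial.natDegree_mul_le).trans (by simp [hpdeg])⟩
    have hdlt : d.natDegree < m := by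
      rcases lt_or_eq_of_le hdle with h' | h'
      · exact h'
      · exfalso
        apply h
        have : d.leadingCoeff = 0 := by rw [Polynomial.leadingCoeff, h', hcoeff]
        exact Polynomial.leadingCoeff_eq_zero.mp this
    have hz := Polynomial.eq_zero_of_natDegree_lt_card_of_eval_eq_zero' d
      ((Finset.range m).image x) ?_ ?_
    · exact h hz
    · intro y hy
      obtain ⟨j, hj, rfl⟩ := Finset.mem_image.mp hy
      simp [hd, hroot j hj, hp, Lagrange.eval_nodal_at_node hj]
    · rwa [Finset.card_image_of_injOn (fun i hi j hj => hinj i hi j hj), Finset.card_range]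
  have hTeq : Tm = Polynomial.C a * p := by
    have := sub_eq_zero.mp hdzero
    exact this
  refine ⟨a, ?_, hTeq⟩
  intro ha0
  have h1 : Tm.eval (Real.cos 0) = Real.cos ((m : ℤ) * 0) := by
    rw [hTm]; exact Polynomial.Chebyshev.T_real_cos 0 (m : ℤ)
  rw [hTeq, ha0] at h1
  simp at h1

private lemma key_trig {m : ℕ} (hm : 0 < m) {t β : ℝ} (ht0 : 0 ≤ t) (htπ : t ≤ π)
    (hβ0 : 0 < β) (hβπ : β < π) (hroot : Real.cos ((m : ℝ) * β) = 0) :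
    |Real.cos ((m : ℝ) * t)| * Real.sin β ≤ π * m * |Real.cos t - Real.cos β| := by
  have hpi := Real.pi_pos
  have hm' : (1 : ℝ) ≤ m := by exact_mod_cast hm
  set A := |(t - β) / 2| with hA
  set S := Real.sin ((t + β) / 2) with hS
  set D := |Real.sin ((t - β) / 2)| with hD
  have hS0 : 0 ≤ S := Real.sin_nonneg_of_nonneg_of_le_pi (by linarith) (by linarith)
  have hA0 : 0 ≤ A := abs_nonneg _
  have hsinβ0 : 0 ≤ Real.sin β := Real.sin_nonneg_of_nonneg_of_le_pi hβ0.le hβπ.le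
  -- |cos(mt)| ≤ 2 m A
  have h1 : |Real.cos ((m : ℝ) * t)| ≤ 2 * m * A := by
    have e : Real.cos ((m : ℝ) * t) = Real.cos ((m : ℝ) * t) - Real.cos ((m : ℝ) * β) := by
      rw [hroot]; ring
    rw [e, Real.cos_sub_cos, abs_mul, abs_mul]
    have b1 : |Real.sin (((m : ℝ) * t + (m : ℝ) * β) / 2)| ≤ 1 := abs_sin_le_one _
    have b2 : |Real.sin (((m : ℝ) * t - (m : ℝ) * β) / 2)| ≤ m * A := by
      calc |Real.sin (((m : ℝ) * t - (m : ℝ) * β) / 2)| ≤ |((m : ℝ) * t - (m : ℝ) * β) / 2| :=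
            Real.abs_sin_le_abs
        _ = m * A := by
            rw [hA, show ((m : ℝ) * t - (m : ℝ) * β) / 2 = (m : ℝ) * ((t - β) / 2) by ring,
              abs_mul, Nat.abs_cast]
    have habs2 : |(-2 : ℝ)| = 2 := by norm_num
    rw [habs2]
    nlinarith [abs_nonneg (Real.sin (((m : ℝ) * t + (m : ℝ) * β) / 2)),
      abs_nonneg (Real.sin (((m : ℝ) * t - (m : ℝ) * β) / 2))]
  -- sin β ≤ 2 S
  have h2 : Real.sin β ≤ 2 * S := by
    have hc := (strictConcaveOn_sin_Icc.concaveOn).2 (Set.mem_Icc.mpr ⟨ht0, htπ⟩)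
      (Set.mem_Icc.mpr ⟨hβ0.le, hβπ.le⟩) (by norm_num : (0:ℝ) ≤ 1/2) (by norm_num : (0:ℝ) ≤ 1/2)
      (by norm_num)
    simp only [smul_eq_mul] at hc
    rw [show (1:ℝ)/2 * t + 1/2 * β = (t + β)/2 by ring] at hc
    have hst : 0 ≤ Real.sin t := Real.sin_nonneg_of_nonneg_of_le_pi ht0 htπ
    rw [hS]; linarith
  -- 2 A ≤ D π
  have h3 : 2 * A ≤ D * π := by
    have hδ : |(t - β) / 2| ≤ π / 2 := by
      rw [abs_div, abs_of_pos (by norm_num : (0:ℝ) < 2)]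
      have habs : |t - β| ≤ π := by rw [abs_le]; constructor <;> linarith
      linarith
    have := Real.mul_abs_le_abs_sin hδ
    rw [div_mul_eq_mul_div, div_le_iff₀ hpi] at this
    rw [hD, hA]; linarith
  -- |cos t - cos β| = 2 S D
  have h4 : |Real.cos t - Real.cos β| = 2 * S * D := by
    rw [Real.cos_sub_cos, abs_mul, abs_mul, show |(-2:ℝ)| = 2 by norm_num, abs_of_nonneg hS0]
  rw [h4]
  have hm0 : (0:ℝ) < m := by linarith
  nlinarith [mul_le_mul h1 h2 hsinβ0 (by positivity), mul_le_mul_of_nonneg_left h3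
    (show (0:ℝ) ≤ (m:ℝ) * S by positivity)]

/-- Elementary Lagrange polynomials at Chebyshev nodes are bounded by π on the interval. -/
theorem chebyshev_lagrange_basis_le_pi (l : ℕ) (hl : 1 ≤ l) (slo shi : ℝ) (hs : slo < shi)
    (node : ℕ → ℝ)
    (hnode : ∀ k, node k =
      (shi + slo) / 2 - (shi - slo) / 2 * Real.cos ((2 * (k : ℝ) + 1) * π / (2 * l + 2)))
    (k : ℕ) (hk : k ≤ l) (s : ℝ) (hs' : s ∈ Set.Icc slo shi) :
    |∏ j ∈ (Finset.range (l + 1)).erase k, (s - node j) / (node k - node j)| ≤ π := by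
  classical
  have hpi := Real.pi_pos
  set m := l + 1 with hm
  have hm0 : 0 < m := by omega
  have hmR : (0:ℝ) < m := by exact_mod_cast hm0
  set θf : ℕ → ℝ := fun j => (2 * (j:ℝ) + 1) * π / (2 * (m:ℝ)) with hθf
  set x : ℕ → ℝ := fun j => Real.cos (θf j) with hx
  set c := (shi + slo) / 2 with hc
  set r := (shi - slo) / 2 with hr
  have hr0 : 0 < r := by rw [hr]; linarith
  have hnode' : ∀ j, node j = c - r * x j := by
    intro j
    rw [hnode j, hx, hθf]
    have : (2 * (l:ℝ) + 2) = 2 * (m:ℝ) := by rw [hm]; push_cast; ring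
    rw [this]
  -- angle facts
  have hθmem : ∀ j, j < m → 0 < θf j ∧ θf j < π := by
    intro j hj
    have hjR : (j:ℝ) < m := by exact_mod_cast hj
    have hjR0 : (0:ℝ) ≤ j := Nat.cast_nonneg j
    constructor
    · apply div_pos (by positivity) (by positivity)
    · rw [hθf, div_lt_iff₀ (by positivity)]
      have hj1 : (j:ℝ) + 1 ≤ m := by exact_mod_cast hj
      nlinarith [mul_lt_mul_of_pos_right (show 2*(j:ℝ)+1 < 2*(m:ℝ) by linarith) hpi]
  -- injectivity of cos nodes
  have hxinj : ∀ i ∈ Finset.range m, ∀ j ∈ Finset.range m, x i = x j → i = j := by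
    intro i hi j hj hxy
    have hi' := hθmem i (Finset.mem_range.mp hi)
    have hj' := hθmem j (Finset.mem_range.mp hj)
    have hθeq : θf i = θf j :=
      Real.injOn_cos ⟨hi'.1.le, hi'.2.le⟩ ⟨hj'.1.le, hj'.2.le⟩ hxy
    rw [hθf] at hθeq
    simp only at hθeq
    have h2 : (i:ℝ) = j := by
      rw [div_eq_div_iff (by positivity) (by positivity)] at hθeq
      have h3 := mul_right_cancel₀ (ne_of_gt (by positivity : (0:ℝ) < 2 * (m:ℝ))) hθeq
      have h4 := mul_right_cancel₀ Real.pi_ne_zero h3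
      linarith
    exact_mod_cast h2
  -- parametrize s
  have hsmem := hs'
  rw [Set.mem_Icc] at hsmem
  have hb1 : -1 ≤ (c - s) / r := by
    rw [le_div_iff₀ hr0, hc, hr]; linarith
  have hb2 : (c - s) / r ≤ 1 := by
    rw [div_le_iff₀ hr0, hc, hr]; linarith
  set t := Real.arccos ((c - s) / r) with ht
  have ht0 : 0 ≤ t := Real.arccos_nonneg _
  have htπ : t ≤ π := Real.arccos_le_pi _
  have hts : Real.cos t = (c - s) / r := Real.cos_arccos hb1 hb2
  have hsrep : s = c - r * Real.cos t := by
    rw [hts]; field_simp; ring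
  -- rewrite product
  have hprod : ∏ j ∈ (Finset.range m).erase k, (s - node j) / (node k - node j)
      = ∏ j ∈ (Finset.range m).erase k, (Real.cos t - x j) / (x k - x j) := by
    refine Finset.prod_congr rfl fun j _ => ?_
    rw [hnode', hnode']
    rw [show s - (c - r * x j) = r * (x j - Real.cos t) by rw [hsrep]; ring,
      show c - r * x k - (c - r * x j) = r * (x j - x k) by ring,
      mul_div_mul_left _ _ (ne_of_gt hr0),
      show x j - Real.cos t = -(Real.cos t - x j) by ring,
      show x j - x k = -(x k - x j) by ring, neg_div_neg_eq]
  rw [hprod]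
  have hk' : k ∈ Finset.range m := Finset.mem_range.mpr (by omega)
  -- Case A: cos t coincides with an erased node
  by_cases hzero : ∃ j ∈ (Finset.range m).erase k, Real.cos t = x j
  · obtain ⟨j, hj, hje⟩ := hzero
    rw [Finset.prod_eq_zero hj (by rw [hje]; simp)]
    simpa using hpi.le
  push_neg at hzero
  -- Case B: cos t = x k
  by_cases hck : Real.cos t = x k
  · have hone : ∀ j ∈ (Finset.range m).erase k, (Real.cos t - x j) / (x k - x j) = 1 := by
      intro j hj
      obtain ⟨hjk, hjm⟩ := Finset.mem_erase.mp hj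
      rw [hck]
      apply div_self
      intro h0
      exact hjk (hxinj j hjm k hk' (by linarith [sub_eq_zero.mp h0]))
    rw [Finset.prod_congr rfl hone, Finset.prod_const_one]
    rw [abs_one]
    linarith [Real.two_le_pi]
  -- Main case
  have hne : ∀ j ∈ Finset.range m, Real.cos t ≠ x j := by
    intro j hj
    by_cases hjk : j = k
    · subst hjk; exact hck
    · exact hzero j (Finset.mem_erase.mpr ⟨hjk, hj⟩)
  have hmθ : ∀ j : ℕ, (m:ℝ) * θf j = j * π + π / 2 := by
    intro j
    rw [hθf]
    field_simp
  have hroots : ∀ j ∈ Finset.range m, (Polynomial.Chebyshev.T ℝ (m:ℤ)).eval (x j) = 0 := by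
    intro j hj
    rw [hx]
    simp only
    rw [Polynomial.Chebyshev.T_real_cos]
    rw [show ((m:ℤ):ℝ) = (m:ℝ) by push_cast; ring, hmθ j, Real.cos_add_pi_div_two,
      Real.sin_nat_mul_pi, neg_zero]
  obtain ⟨a, ha0, hT⟩ := T_eq_C_mul_nodal hm0 x hxinj hroots
  set N := ∏ j ∈ (Finset.range m).erase k, (Real.cos t - x j) with hN
  set D := ∏ j ∈ (Finset.range m).erase k, (x k - x j) with hD
  -- numerator identity
  have hevalT : Real.cos ((m:ℝ) * t) = a * ((Real.cos t - x k) * N) := by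
    have h1 : (Polynomial.Chebyshev.T ℝ (m:ℤ)).eval (Real.cos t) = Real.cos (((m:ℤ):ℝ) * t) :=
      Polynomial.Chebyshev.T_real_cos t (m:ℤ)
    rw [hT, Polynomial.eval_mul, Polynomial.eval_C, Lagrange.eval_nodal,
      ← Finset.mul_prod_erase (Finset.range m) _ hk'] at h1
    rw [show ((m:ℤ):ℝ) = (m:ℝ) by push_cast; ring] at h1
    rw [← h1, hN]
  -- denominator identity
  have hsink : 0 < Real.sin (θf k) := by
    have := hθmem k (Finset.mem_range.mp hk')
    exact Real.sin_pos_of_pos_of_lt_pi this.1 this.2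
  have hdT : (Polynomial.derivative (Polynomial.Chebyshev.T ℝ (m:ℤ))).eval (x k) = a * D := by
    rw [hT, Polynomial.derivative_C_mul, Polynomial.eval_mul, Polynomial.eval_C,
      Lagrange.eval_nodal_derivative_eval_node_eq hk', Lagrange.eval_nodal]
  have hdU : (Polynomial.derivative (Polynomial.Chebyshev.T ℝ (m:ℤ))).eval (x k) *
      Real.sin (θf k) = (m:ℝ) * Real.sin ((m:ℝ) * θf k) := by
    rw [Polynomial.Chebyshev.T_derivative_eq_U, Polynomial.eval_mul, Polynomial.eval_intCast,
      mul_assoc, show x k = Real.cos (θf k) from rfl, Polynomial.Chebyshev.U_real_cos]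
    push_cast
    ring_nf
  have habs_sin : |Real.sin ((m:ℝ) * θf k)| = 1 := by
    rw [hmθ k, Real.sin_add_pi_div_two, show ((k:ℝ) * π) = ((k:ℤ):ℝ) * π by push_cast; ring,
      Real.abs_cos_int_mul_pi]
  have hDfact : |a| * |D| * Real.sin (θf k) = (m:ℝ) := by
    have heq : a * D * Real.sin (θf k) = (m:ℝ) * Real.sin ((m:ℝ) * θf k) := by
      rw [← hdT]; exact hdU
    have := congrArg abs heq
    rw [abs_mul, abs_mul, abs_mul, habs_sin, mul_one, abs_of_pos hsink,
      Nat.abs_cast] at this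
    linarith [this]
  have hDne : |D| ≠ 0 := by
    intro h0
    rw [h0] at hDfact
    simp at hDfact
    nlinarith
  have hD0 : 0 < |D| := lt_of_le_of_ne (abs_nonneg D) (Ne.symm hDne)
  -- numerator absolute value
  have hctk : Real.cos t - x k ≠ 0 := sub_ne_zero.mpr (hne k hk')
  have hNfact : |Real.cos ((m:ℝ) * t)| = |a| * |Real.cos t - x k| * |N| := by
    rw [hevalT, abs_mul, abs_mul, mul_assoc]
  -- key inequality
  have hθk := hθmem k (Finset.mem_range.mp hk')
  have hkey := key_trig hm0 ht0 htπ hθk.1 hθk.2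
    (by rw [hmθ k, Real.cos_add_pi_div_two, Real.sin_nat_mul_pi, neg_zero])
  rw [show Real.cos (θf k) = x k from rfl] at hkey
  -- assemble
  clear_value m θf x c r t N D
  rw [Finset.prod_div_distrib, ← hN, ← hD, abs_div]
  rw [div_le_iff₀ hD0]
  have hapos : 0 < |a| := abs_pos.mpr ha0
  have hctk0 : 0 < |Real.cos t - x k| := abs_pos.mpr hctk
  have hkey' : |a| * |Real.cos t - x k| * |N| * Real.sin (θf k)
      ≤ π * (|a| * |D| * Real.sin (θf k)) * |Real.cos t - x k| := by
    rw [← hNfact, hDfact]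
    exact hkey
  have hfinal : (|a| * |Real.cos t - x k| * Real.sin (θf k)) * |N|
      ≤ (|a| * |Real.cos t - x k| * Real.sin (θf k)) * (π * |D|) := by
    calc (|a| * |Real.cos t - x k| * Real.sin (θf k)) * |N|
        = |a| * |Real.cos t - x k| * |N| * Real.sin (θf k) := by ring
      _ ≤ π * (|a| * |D| * Real.sin (θf k)) * |Real.cos t - x k| := hkey'
      _ = (|a| * |Real.cos t - x k| * Real.sin (θf k)) * (π * |D|) := by ring
  have hppos : 0 < |a| * |Real.cos t - x k| * Real.sin (θf k) := by positivity
  have := le_of_mul_le_mul_left hfinal hppos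
  linarith
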